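/- For any single-qubit pure state |χ⟩ and any 0 ≤ p ≤ 1, the measurement element F = p|χ⟩⟨χ| ⊗ |χ⟩⟨χ| on the two clones (tensored with the identity on the ancilla) yields the sharp effective POVM element E = (2/3) p |χ⟩⟨χ| on the input of the universal 1→2 cloner. -/
import Mathlib


open scoped ComplexConjugate ComplexOrder
open Finset Matrix

noncomputable section

/-- Index set for three qubits: (clone 1, clone 2, ancilla). -/
abbrev I3 := Fin 2 × Fin 2 × Fin 2

/-- Image of |0⟩|00⟩ under the universal 1→2 cloner:
    √(2/3)|00⟩|1⟩ − (1/√6)(|01⟩+|10⟩)|0⟩. -/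
def out0 : I3 → ℂ := fun p =>
  if p = (0, 0, 1) then ((Real.sqrt (2/3) : ℝ) : ℂ)
  else if p = (0, 1, 0) then -(((1 / Real.sqrt 6 : ℝ)) : ℂ)
  else if p = (1, 0, 0) then -(((1 / Real.sqrt 6 : ℝ)) : ℂ)
  else 0

/-- Image of |1⟩|00⟩ under the universal 1→2 cloner:
    −√(2/3)|11⟩|0⟩ + (1/√6)(|10⟩+|01⟩)|1⟩. -/
def out1 : I3 → ℂ := fun p =>
  if p = (1, 1, 0) then -((Real.sqrt (2/3) : ℝ) : ℂ)
  else if p = (1, 0, 1) then (((1 / Real.sqrt 6 : ℝ)) : ℂ)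
  else if p = (0, 1, 1) then (((1 / Real.sqrt 6 : ℝ)) : ℂ)
  else 0

/-- Output of the cloner on input α|0⟩+β|1⟩. -/
def cloneOut (α β : ℂ) : I3 → ℂ := fun p => α * out0 p + β * out1 p

/-- Output density matrix U(|φ⟩⟨φ| ⊗ |00⟩⟨00|)U†. -/
def rhoOut (α β : ℂ) : Matrix I3 I3 ℂ :=
  Matrix.of fun p q => cloneOut α β p * conj (cloneOut α β q)

/-- Reduced state of the first clone. -/
def rhoC (α β : ℂ) : Matrix (Fin 2) (Fin 2) ℂ :=
  Matrix.of fun i j => ∑ b : Fin 2, ∑ c : Fin 2, rhoOut α β (i, b, c) (j, b, c)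

/-- Reduced state of the ancilla. -/
def rhoA (α β : ℂ) : Matrix (Fin 2) (Fin 2) ℂ :=
  Matrix.of fun i j => ∑ a : Fin 2, ∑ b : Fin 2, rhoOut α β (a, b, i) (a, b, j)

/-- Reduced state of the two clones. -/
def rhoCC (α β : ℂ) : Matrix (Fin 2 × Fin 2) (Fin 2 × Fin 2) ℂ :=
  Matrix.of fun p q => ∑ c : Fin 2, rhoOut α β (p.1, p.2, c) (q.1, q.2, c)

def σx : Matrix (Fin 2) (Fin 2) ℂ := !![0, 1; 1, 0]
def σy : Matrix (Fin 2) (Fin 2) ℂ := !![0, -Complex.I; Complex.I, 0]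
def σz : Matrix (Fin 2) (Fin 2) ℂ := !![1, 0; 0, -1]

/-- s·σ for a real 3-vector s. -/
def pauliDot (s : Fin 3 → ℝ) : Matrix (Fin 2) (Fin 2) ℂ :=
  ((s 0 : ℝ) : ℂ) • σx + ((s 1 : ℝ) : ℂ) • σy + ((s 2 : ℝ) : ℂ) • σz

/-- (1/2)(I + s·σ), the state with Bloch vector s. -/
def blochMat (s : Fin 3 → ℝ) : Matrix (Fin 2) (Fin 2) ℂ :=
  (1/2 : ℂ) • (1 + pauliDot s)

def φvec (α β : ℂ) : Fin 2 → ℂ := ![α, β]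

/-- Outer product |v⟩⟨v| on a qubit. -/
def outer (v : Fin 2 → ℂ) : Matrix (Fin 2) (Fin 2) ℂ :=
  Matrix.of fun i j => v i * conj (v j)

/-- The images U(|i⟩|00⟩) of the two input basis states. -/
def Uout : Fin 2 → I3 → ℂ := ![out0, out1]

/-- Effective operator on the input qubit corresponding to an operator F on the output:
    E i j = ⟨U(|i⟩|00⟩)| F |U(|j⟩|00⟩)⟩ = (⟨00|_{ba} U† F U |00⟩_{ba}) i j. -/
def effOf (F : Matrix I3 I3 ℂ) : Matrix (Fin 2) (Fin 2) ℂ :=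
  Matrix.of fun i j => ∑ p : I3, ∑ q : I3, conj (Uout i p) * F p q * Uout j q

/-- F ⊗ I ⊗ I: a measurement on the first clone only. -/
def extC (F : Matrix (Fin 2) (Fin 2) ℂ) : Matrix I3 I3 ℂ :=
  Matrix.of fun p q => F p.1 q.1 * (if p.2 = q.2 then 1 else 0)

/-- I ⊗ I ⊗ F: a measurement on the ancilla only. -/
def extA (F : Matrix (Fin 2) (Fin 2) ℂ) : Matrix I3 I3 ℂ :=
  Matrix.of fun p q => (if (p.1, p.2.1) = (q.1, q.2.1) then 1 else 0) * F p.2.2 q.2.2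

/-- F ⊗ I_ancilla: a measurement on the two clones. -/
def extCC (F : Matrix (Fin 2 × Fin 2) (Fin 2 × Fin 2) ℂ) : Matrix I3 I3 ℂ :=
  Matrix.of fun p q => F (p.1, p.2.1) (q.1, q.2.1) * (if p.2.2 = q.2.2 then 1 else 0)

/-- Bell basis on two qubits, in the order φ⁺, ψ⁺, φ⁻, ψ⁻. -/
def bell : Fin 4 → (Fin 2 × Fin 2) → ℂ :=
  ![fun p => if p = (0,0) then ((1 / Real.sqrt 2 : ℝ) : ℂ)
             else if p = (1,1) then ((1 / Real.sqrt 2 : ℝ) : ℂ) else 0,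
    fun p => if p = (0,1) then ((1 / Real.sqrt 2 : ℝ) : ℂ)
             else if p = (1,0) then ((1 / Real.sqrt 2 : ℝ) : ℂ) else 0,
    fun p => if p = (0,0) then ((1 / Real.sqrt 2 : ℝ) : ℂ)
             else if p = (1,1) then -((1 / Real.sqrt 2 : ℝ) : ℂ) else 0,
    fun p => if p = (0,1) then ((1 / Real.sqrt 2 : ℝ) : ℂ)
             else if p = (1,0) then -((1 / Real.sqrt 2 : ℝ) : ℂ) else 0]

/-- Kronecker product of two single-qubit matrices. -/
def kron2 (A B : Matrix (Fin 2) (Fin 2) ℂ) : Matrix (Fin 2 × Fin 2) (Fin 2 × Fin 2) ℂ :=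
  Matrix.of fun p q => A p.1 q.1 * B p.2 q.2

/-- Projector onto the symmetric subspace of two qubits: I − |ψ⁻⟩⟨ψ⁻|. -/
def symProj : Matrix (Fin 2 × Fin 2) (Fin 2 × Fin 2) ℂ :=
  1 - Matrix.of fun p q => bell 3 p * conj (bell 3 q)

/-- Projector onto the antisymmetric subspace: |ψ⁻⟩⟨ψ⁻|. -/
def antiProj : Matrix (Fin 2 × Fin 2) (Fin 2 × Fin 2) ℂ :=
  Matrix.of fun p q => bell 3 p * conj (bell 3 q)

/-- Computational basis vector |abc⟩ of three qubits. -/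
def e3 (a b c : Fin 2) : I3 → ℂ := fun p => if p = (a, b, c) then 1 else 0

/-- ∑ₚ conj(v p) w p, the inner product on three qubits. -/
def inner3 (v w : I3 → ℂ) : ℂ := ∑ p : I3, conj (v p) * w p

set_option maxHeartbeats 3200000 in
/-- F = p|χ⟩⟨χ| ⊗ |χ⟩⟨χ| on the two clones gives the sharp effective
element E = (2/3)p |χ⟩⟨χ| on the input. -/
theorem product_measurement_sharp (χ : Fin 2 → ℂ)
    (hχ : ∑ i : Fin 2, Complex.normSq (χ i) = 1)
    (p : ℝ) (hp0 : 0 ≤ p) (hp1 : p ≤ 1) :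
    effOf (extCC ((p : ℂ) • kron2 (outer χ) (outer χ))) =
      ((2/3 : ℂ) * (p : ℂ)) • outer χ := by

  have h : χ 0 * conj (χ 0) + χ 1 * conj (χ 1) = 1 := by
    simp only [Fin.sum_univ_two] at hχ
    rw [Complex.mul_conj, Complex.mul_conj]
    norm_cast
  have hsR : Real.sqrt (2/3) * Real.sqrt (2/3) = 2/3 :=
    Real.mul_self_sqrt (by norm_num)
  have hs : ((Real.sqrt (2/3) : ℝ) : ℂ) * ((Real.sqrt (2/3) : ℝ) : ℂ) = 2/3 := by
    rw [← Complex.ofReal_mul, hsR]; norm_num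
  have htR : (1 / Real.sqrt 6) * (1 / Real.sqrt 6) = (1/6 : ℝ) := by
    rw [div_mul_div_comm, one_mul, Real.mul_self_sqrt (by norm_num)]
  have ht : ((1 / Real.sqrt 6 : ℝ) : ℂ) * ((1 / Real.sqrt 6 : ℝ) : ℂ) = 1/6 := by
    rw [← Complex.ofReal_mul, htR]; norm_num
  have hstR : Real.sqrt (2/3) * (1 / Real.sqrt 6) = (1/3 : ℝ) := by
    rw [one_div, ← Real.sqrt_inv, ← Real.sqrt_mul (by norm_num)]
    rw [show (2/3 : ℝ) * 6⁻¹ = (1/3)^2 by norm_num, Real.sqrt_sq (by norm_num)]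
  have hst : ((Real.sqrt (2/3) : ℝ) : ℂ) * ((1 / Real.sqrt 6 : ℝ) : ℂ) = 1/3 := by
    rw [← Complex.ofReal_mul, hstR]; norm_num
  ext i j
  fin_cases i <;> fin_cases j <;>
    simp (config := { decide := true, maxSteps := 10000000 }) only [effOf, extCC, kron2, outer, Uout, out0, out1, Matrix.smul_apply,
        Matrix.of_apply, smul_eq_mul, Fintype.sum_prod_type, Fin.sum_univ_two,
        Matrix.cons_val_zero, Matrix.cons_val_one, Matrix.head_cons,
        Prod.mk.injEq, Fin.isValue, Fin.mk_zero, Fin.mk_one,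
        if_true, if_false, ite_true, ite_false, mul_one, mul_zero, zero_mul,
        one_mul, add_zero, zero_add, neg_neg, mul_neg, neg_mul, map_zero, map_neg, _root_.map_one, Complex.conj_ofReal]
  · linear_combination (p:ℂ) * χ 0^2 * conj (χ 0)^2 * hs
      + 4*(p:ℂ)* χ 0 * conj (χ 0) * χ 1 * conj (χ 1) * ht
      + (2/3)*(p:ℂ)* χ 0 * conj (χ 0) * h
  · linear_combination 2*(p:ℂ)* χ 0 * conj (χ 1) * (χ 0 * conj (χ 0) + χ 1 * conj (χ 1)) * hst
      + (2/3)*(p:ℂ)* χ 0 * conj (χ 1) * h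
  · linear_combination 2*(p:ℂ)* χ 1 * conj (χ 0) * (χ 0 * conj (χ 0) + χ 1 * conj (χ 1)) * hst
      + (2/3)*(p:ℂ)* χ 1 * conj (χ 0) * h
  · linear_combination (p:ℂ) * χ 1^2 * conj (χ 1)^2 * hs
      + 4*(p:ℂ)* χ 0 * conj (χ 0) * χ 1 * conj (χ 1) * ht
      + (2/3)*(p:ℂ)* χ 1 * conj (χ 1) * h
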